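/- Let S be a countable type with the discrete σ-algebra, let μ be a probability measure on the sequence space Ω = ℕ → S, let ε > 0, let ℓ ≥ 1 be a natural number, and let W ⊆ Ω be a measurable set with μ(W) > 1 − ε. Then there exists a set V of finite sequences (lists) over S, each of length ℓ, such that μ(⋃_{h∈V} Cyl(h)) ≥ 1 − 2·ℓ·√(ℓ·ε) and, for every h ∈ V and every prefix h′ of h with μ(Cyl(h′)) > 0, one has μ(W ∩ Cyl(h′)) > (1 − √ε)·μ(Cyl(h′)). -/

import Mathlib

open MeasureTheory ENNReal

/-- The cylinder set of all infinite sequences extending the finite sequence `h`. -/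
def Cyl {S : Type*} (h : List S) : Set (ℕ → S) :=
  {ω | ∀ i : Fin h.length, ω i = h.get i}

lemma measurableSet_Cyl {S : Type*} [MeasurableSpace S] [DiscreteMeasurableSpace S]
    (h : List S) : MeasurableSet (Cyl h) := by
  have : Cyl h = ⋂ i : Fin h.length, (fun ω : ℕ → S => ω i) ⁻¹' {h.get i} := by
    ext ω; simp [Cyl]
  rw [this]
  exact MeasurableSet.iInter fun i => (measurable_pi_apply _) (measurableSet_singleton _)

lemma Cyl_disjoint {S : Type*} {h₁ h₂ : List S} (hlen : h₁.length = h₂.length)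
    (hne : h₁ ≠ h₂) : Disjoint (Cyl h₁) (Cyl h₂) := by
  rw [Set.disjoint_left]
  intro ω hω₁ hω₂
  apply hne
  apply List.ext_get hlen
  intro i hi₁ hi₂
  rw [← hω₁ ⟨i, hi₁⟩, ← hω₂ ⟨i, hi₂⟩]

lemma Cyl_subset_of_prefix {S : Type*} {h' h : List S} (hp : h' <+: h) :
    Cyl h ⊆ Cyl h' := by
  obtain ⟨t, rfl⟩ := hp
  intro ω hω i
  have hi : (i : ℕ) < (h' ++ t).length := by
    simp only [List.length_append]; omega
  have := hω ⟨i, hi⟩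
  rw [this]
  simp [List.getElem_append, i.isLt]

lemma mem_Cyl_ofFn {S : Type*} (ω : ℕ → S) (ℓ : ℕ) :
    ω ∈ Cyl (List.ofFn fun i : Fin ℓ => ω i) := by
  intro i
  simp [List.get_ofFn]

/-- A large measurable set `W` of runs admits a set `V` of histories of length `ℓ`
of mass at least `1 - 2ℓ√(ℓε)` such that `W` has conditional probability more than
`1 - √ε` given any prefix of any history in `V`. -/
theorem stmt6 {S : Type*} [Countable S] [MeasurableSpace S] [DiscreteMeasurableSpace S]
    (μ : Measure (ℕ → S)) [IsProbabilityMeasure μ]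
    (ε : ℝ) (hε : 0 < ε) (ℓ : ℕ) (hℓ : 1 ≤ ℓ)
    (W : Set (ℕ → S)) (hW : MeasurableSet W) (hWμ : 1 - ε < (μ W).toReal) :
    ∃ V : Set (List S), (∀ h ∈ V, h.length = ℓ) ∧
      1 - 2 * ℓ * Real.sqrt (ℓ * ε) ≤ (μ (⋃ h ∈ V, Cyl h)).toReal ∧
      ∀ h ∈ V, ∀ h' : List S, h' <+: h → 0 < (μ (Cyl h')).toReal →
        (1 - Real.sqrt ε) * (μ (Cyl h')).toReal < (μ (W ∩ Cyl h')).toReal := by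
    classical
  set sε := Real.sqrt ε with hsεdef
  have hsε0 : 0 < sε := Real.sqrt_pos.mpr hε
  set bad : List S → Prop :=
    fun h' => (μ (W ∩ Cyl h')).toReal ≤ (1 - sε) * (μ (Cyl h')).toReal with hbaddef
  set V : Set (List S) := {h | h.length = ℓ ∧ ∀ h', h' <+: h → ¬ bad h'} with hVdef
  refine ⟨V, fun h hh => hh.1, ?_, fun h hh h' hp _ => lt_of_not_ge (hh.2 h' hp)⟩
  -- level-k bad sets
  set Bk : ℕ → Set (List S) := fun k => {h' | h'.length = k ∧ bad h'} with hBkdef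
  set U : ℕ → Set (ℕ → S) := fun k => ⋃ h' ∈ Bk k, Cyl h' with hUdef
  have hWc : (μ Wᶜ).toReal < ε := by
    have h1 : μ W + μ Wᶜ = 1 := prob_add_prob_compl hW
    have h2 : (μ W).toReal + (μ Wᶜ).toReal = 1 := by
      rw [← ENNReal.toReal_add (measure_ne_top μ _) (measure_ne_top μ _), h1, ENNReal.toReal_one]
    linarith
  have hWcle : μ Wᶜ ≤ ENNReal.ofReal ε := by
    rw [ENNReal.le_ofReal_iff_toReal_le (measure_ne_top μ _) hε.le]
    exact hWc.le
  have hstep1 : ∀ k, μ (U k) ≤ ENNReal.ofReal sε := by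
    intro k
    have hcnt : (Bk k).Countable := Set.to_countable _
    have hdisj : (Bk k).PairwiseDisjoint Cyl := fun a ha b hb hab =>
      Cyl_disjoint (ha.1.trans hb.1.symm) hab
    have hsum : μ (U k) = ∑' h' : Bk k, μ (Cyl (h' : List S)) :=
      measure_biUnion hcnt hdisj (fun h' _ => measurableSet_Cyl h')
    have hper : ∀ h' ∈ Bk k, ENNReal.ofReal sε * μ (Cyl h') ≤ μ (Wᶜ ∩ Cyl h') := by
      intro h' hh'
      have hb : (μ (W ∩ Cyl h')).toReal ≤ (1 - sε) * (μ (Cyl h')).toReal := hh'.2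
      have hC : μ (Cyl h') ≠ ⊤ := measure_ne_top μ _
      have hadd : (μ (W ∩ Cyl h')).toReal + (μ (Wᶜ ∩ Cyl h')).toReal
          = (μ (Cyl h')).toReal := by
        rw [← ENNReal.toReal_add (measure_ne_top μ _) (measure_ne_top μ _)]
        congr 1
        rw [Set.inter_comm W, Set.inter_comm Wᶜ, ← Set.diff_eq]
        exact measure_inter_add_diff _ hW
      have hkey : sε * (μ (Cyl h')).toReal ≤ (μ (Wᶜ ∩ Cyl h')).toReal := by nlinarith
      calc ENNReal.ofReal sε * μ (Cyl h')
          = ENNReal.ofReal (sε * (μ (Cyl h')).toReal) := by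
            rw [ENNReal.ofReal_mul hsε0.le, ENNReal.ofReal_toReal hC]
        _ ≤ ENNReal.ofReal ((μ (Wᶜ ∩ Cyl h')).toReal) := ENNReal.ofReal_le_ofReal hkey
        _ = μ (Wᶜ ∩ Cyl h') := ENNReal.ofReal_toReal (measure_ne_top μ _)
    have hmain : ENNReal.ofReal sε * μ (U k) ≤ μ Wᶜ := by
      rw [hsum, ← ENNReal.tsum_mul_left]
      calc ∑' h' : Bk k, ENNReal.ofReal sε * μ (Cyl (h' : List S))
          ≤ ∑' h' : Bk k, μ (Wᶜ ∩ Cyl (h' : List S)) :=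
            ENNReal.tsum_le_tsum (fun h' => hper h'.1 h'.2)
        _ = μ (⋃ h' ∈ Bk k, Wᶜ ∩ Cyl h') := by
            refine (measure_biUnion hcnt ?_ (fun h' _ => hW.compl.inter (measurableSet_Cyl h'))).symm
            exact fun a ha b hb hab =>
              ((Cyl_disjoint (ha.1.trans hb.1.symm) hab).mono
                Set.inter_subset_right Set.inter_subset_right)
        _ ≤ μ Wᶜ := by
            refine measure_mono ?_
            simp only [Set.iUnion_subset_iff]
            exact fun h' _ => Set.inter_subset_left
    have hdiv : μ (U k) ≤ μ Wᶜ / ENNReal.ofReal sε := by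
      rw [ENNReal.le_div_iff_mul_le (Or.inl (by simpa using hsε0)) (Or.inl ENNReal.ofReal_ne_top)]
      rw [mul_comm]; exact hmain
    calc μ (U k) ≤ μ Wᶜ / ENNReal.ofReal sε := hdiv
      _ ≤ ENNReal.ofReal ε / ENNReal.ofReal sε := by gcongr
      _ = ENNReal.ofReal (ε / sε) := (ENNReal.ofReal_div_of_pos hsε0).symm
      _ = ENNReal.ofReal sε := by
          congr 1
          rw [eq_comm, eq_div_iff hsε0.ne', hsεdef, Real.mul_self_sqrt hε.le]
  -- complement inclusion
  have hsub : (⋃ h ∈ V, Cyl h)ᶜ ⊆ ⋃ k ∈ Finset.range (ℓ + 1), U k := by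
    intro ω hω
    have hω' : ω ∉ ⋃ h ∈ V, Cyl h := hω
    set hl := List.ofFn (fun i : Fin ℓ => ω i) with hldef
    have hωl : ω ∈ Cyl hl := mem_Cyl_ofFn ω ℓ
    have hlen : hl.length = ℓ := by simp [hldef]
    have hnv : hl ∉ V := fun hv => hω' (Set.mem_biUnion hv hωl)
    have : ¬ (∀ h', h' <+: hl → ¬ bad h') := fun hall => hnv ⟨hlen, hall⟩
    push_neg at this
    obtain ⟨h', hp, hb⟩ := this
    have hle : h'.length ≤ ℓ := hlen ▸ hp.length_le
    simp only [Set.mem_iUnion]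
    exact ⟨h'.length, Finset.mem_range.mpr (by omega), Set.mem_biUnion ⟨rfl, hb⟩
      (Cyl_subset_of_prefix hp hωl)⟩
  -- measure bound
  have hUbound : μ (⋃ k ∈ Finset.range (ℓ + 1), U k) ≤ (ℓ + 1) * ENNReal.ofReal sε := by
    calc μ (⋃ k ∈ Finset.range (ℓ + 1), U k)
        ≤ ∑ k ∈ Finset.range (ℓ + 1), μ (U k) := measure_biUnion_finset_le _ _
      _ ≤ ∑ k ∈ Finset.range (ℓ + 1), ENNReal.ofReal sε :=
          Finset.sum_le_sum fun k _ => hstep1 k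
      _ = (ℓ + 1) * ENNReal.ofReal sε := by
          simp [Finset.sum_const, nsmul_eq_mul]
  have hone : (1 : ENNReal) ≤ μ (⋃ h ∈ V, Cyl h) + (ℓ + 1) * ENNReal.ofReal sε := by
    have huniv : (Set.univ : Set (ℕ → S)) ⊆ (⋃ h ∈ V, Cyl h) ∪ ⋃ k ∈ Finset.range (ℓ + 1), U k := by
      intro ω _
      by_cases hmem : ω ∈ ⋃ h ∈ V, Cyl h
      · exact Or.inl hmem
      · exact Or.inr (hsub hmem)
    calc (1 : ENNReal) = μ Set.univ := (measure_univ).symm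
      _ ≤ μ ((⋃ h ∈ V, Cyl h) ∪ ⋃ k ∈ Finset.range (ℓ + 1), U k) := measure_mono huniv
      _ ≤ μ (⋃ h ∈ V, Cyl h) + μ (⋃ k ∈ Finset.range (ℓ + 1), U k) := measure_union_le _ _
      _ ≤ μ (⋃ h ∈ V, Cyl h) + (ℓ + 1) * ENNReal.ofReal sε := by gcongr
  have honeR : (1 : ℝ) ≤ (μ (⋃ h ∈ V, Cyl h)).toReal + (ℓ + 1) * sε := by
    have hne1 : μ (⋃ h ∈ V, Cyl h) ≠ ⊤ := measure_ne_top μ _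
    have hne2 : ((ℓ : ℝ≥0∞) + 1) * ENNReal.ofReal sε ≠ ⊤ := by
      exact ENNReal.mul_ne_top (by simp) ENNReal.ofReal_ne_top
    have := ENNReal.toReal_mono (ENNReal.add_ne_top.mpr ⟨hne1, hne2⟩) hone
    rw [ENNReal.toReal_add hne1 hne2, ENNReal.toReal_mul, ENNReal.toReal_one,
      ENNReal.toReal_ofReal hsε0.le] at this
    have hc : ((ℓ : ℝ≥0∞) + 1).toReal = (ℓ : ℝ) + 1 := by
      rw [ENNReal.toReal_add (by simp) (by simp)]; simp
    rw [hc] at this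
    simpa using this
  -- final arithmetic
  have hsqrt : sε ≤ Real.sqrt (ℓ * ε) := by
    apply Real.sqrt_le_sqrt
    nlinarith [(Nat.one_le_cast (α := ℝ)).mpr hℓ]
  have hℓR : (1 : ℝ) ≤ ℓ := Nat.one_le_cast.mpr hℓ
  nlinarith [Real.sqrt_nonneg (ℓ * ε), hsε0.le]
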